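/- For all integers k ≥ 0 and i ≥ 0 (not both zero), the δ-vector of Δ^k × ℓ^i is alternatingly increasing; in particular it is unimodal with maximum at index ⌊(2k+i-1)/2⌋. -/

import Mathlib

open PowerSeries

noncomputable section
namespace DSCAI

def fk (k i : ℕ) : ℕ → ℤ := fun m =>
  ((((m : ℤ) + 1) * ((m : ℤ) + 2) / 2) ^ k * ((m : ℤ) + 1) ^ i : ℤ)

def Dk (k i : ℕ) : ℕ → ℤ := fun c =>
  PowerSeries.coeff (R := ℤ) c ((1 - PowerSeries.X) ^ (2 * k + i + 1) *
    PowerSeries.mk (fk k i))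

lemma coeff_one_sub_X_mul_zero (F : PowerSeries ℤ) :
    PowerSeries.coeff (R := ℤ) 0 ((1 - PowerSeries.X) * F) = PowerSeries.coeff (R := ℤ) 0 F := by
  rw [sub_mul, one_mul, map_sub, PowerSeries.coeff_zero_X_mul, sub_zero]

lemma coeff_one_sub_X_mul_succ (F : PowerSeries ℤ) (c : ℕ) :
    PowerSeries.coeff (R := ℤ) (c+1) ((1 - PowerSeries.X) * F)
      = PowerSeries.coeff (R := ℤ) (c+1) F - PowerSeries.coeff (R := ℤ) c F := by
  rw [sub_mul, one_mul, map_sub, PowerSeries.coeff_succ_X_mul]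

lemma deriv_X_mul_mk (f : ℕ → ℤ) :
    d⁄dX ℤ (PowerSeries.X * PowerSeries.mk f)
      = PowerSeries.mk (fun m => ((m : ℤ) + 1) * f m) := by
  ext c
  rw [PowerSeries.coeff_derivative, PowerSeries.coeff_succ_X_mul, PowerSeries.coeff_mk,
    PowerSeries.coeff_mk]
  ring

lemma deriv_one_sub_X_pow (n : ℕ) :
    d⁄dX ℤ ((1 - PowerSeries.X) ^ (n+1))
      = -(PowerSeries.C (R := ℤ) ((n : ℤ)+1) * (1 - PowerSeries.X) ^ n) := by
  rw [Derivation.leibniz_pow]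
  have h1 : d⁄dX ℤ (1 - PowerSeries.X) = -1 := by
    rw [map_sub]; simp
  rw [h1]
  simp only [Nat.add_sub_cancel, smul_eq_mul, nsmul_eq_mul]
  rw [show ((n:ℤ)+1) = ((n:ℕ):ℤ)+1 from rfl, map_add, map_natCast, map_one]
  push_cast
  ring

lemma keyL (f : ℕ → ℤ) (n : ℕ) :
    (1 - PowerSeries.X) ^ (n+2) * PowerSeries.mk (fun m => ((m : ℤ) + 1) * f m)
      = (1 - PowerSeries.X) * d⁄dX ℤ (PowerSeries.X * ((1 - PowerSeries.X) ^ (n+1) * PowerSeries.mk f))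
        + (PowerSeries.C (R := ℤ) ((n : ℤ)+1)) * (PowerSeries.X * ((1 - PowerSeries.X) ^ (n+1) * PowerSeries.mk f)) := by
  have hmul : PowerSeries.X * ((1 - PowerSeries.X) ^ (n+1) * PowerSeries.mk f)
      = (1 - PowerSeries.X) ^ (n+1) * (PowerSeries.X * PowerSeries.mk f) := by ring
  rw [hmul, Derivation.leibniz, deriv_X_mul_mk, deriv_one_sub_X_pow]
  simp only [smul_eq_mul]
  ring


lemma coeff_rhs_succ (G : PowerSeries ℤ) (n c : ℕ) :
    PowerSeries.coeff (R := ℤ) (c+1)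
        ((1 - PowerSeries.X) * d⁄dX ℤ (PowerSeries.X * G)
          + (PowerSeries.C (R := ℤ) ((n : ℤ)+1)) * (PowerSeries.X * G))
      = ((c : ℤ)+2) * PowerSeries.coeff (R := ℤ) (c+1) G + ((n : ℤ) - c) * PowerSeries.coeff (R := ℤ) c G := by
  rw [map_add, coeff_one_sub_X_mul_succ, PowerSeries.coeff_C_mul,
    PowerSeries.coeff_derivative, PowerSeries.coeff_derivative]
  rw [show c+1+1 = (c+1)+1 from rfl, PowerSeries.coeff_succ_X_mul,
    PowerSeries.coeff_succ_X_mul]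
  push_cast
  ring

lemma coeff_rhs_zero (G : PowerSeries ℤ) (n : ℕ) :
    PowerSeries.coeff (R := ℤ) 0
        ((1 - PowerSeries.X) * d⁄dX ℤ (PowerSeries.X * G)
          + (PowerSeries.C (R := ℤ) ((n : ℤ)+1)) * (PowerSeries.X * G))
      = PowerSeries.coeff (R := ℤ) 0 G := by
  rw [map_add, coeff_one_sub_X_mul_zero, PowerSeries.coeff_C_mul,
    PowerSeries.coeff_derivative, PowerSeries.coeff_zero_X_mul,
    PowerSeries.coeff_succ_X_mul]
  push_cast
  ring

lemma recL_aux_succ (f : ℕ → ℤ) (n c : ℕ) :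
    PowerSeries.coeff (R := ℤ) (c+1)
        ((1 - PowerSeries.X) ^ (n+2) * PowerSeries.mk (fun m => ((m : ℤ) + 1) * f m))
      = ((c : ℤ)+2) * PowerSeries.coeff (R := ℤ) (c+1) ((1 - PowerSeries.X) ^ (n+1) * PowerSeries.mk f)
        + ((n : ℤ) - c) * PowerSeries.coeff (R := ℤ) c ((1 - PowerSeries.X) ^ (n+1) * PowerSeries.mk f) := by
  rw [keyL, coeff_rhs_succ]

lemma recL_aux_zero (f : ℕ → ℤ) (n : ℕ) :
    PowerSeries.coeff (R := ℤ) 0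
        ((1 - PowerSeries.X) ^ (n+2) * PowerSeries.mk (fun m => ((m : ℤ) + 1) * f m))
      = PowerSeries.coeff (R := ℤ) 0 ((1 - PowerSeries.X) ^ (n+1) * PowerSeries.mk f) := by
  rw [keyL, coeff_rhs_zero]

lemma fk_succ (k i : ℕ) : fk k (i+1) = fun m : ℕ => ((m : ℤ) + 1) * fk k i m := by
  funext m
  simp only [fk, pow_succ]
  ring

lemma recL_succ (k i c : ℕ) :
    Dk k (i+1) (c+1)
      = ((c : ℤ)+2) * Dk k i (c+1) + ((2*k+i : ℕ) - (c:ℤ)) * Dk k i c := by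
  have h : 2 * k + (i+1) + 1 = (2*k+i) + 2 := by omega
  have h2 : 2 * k + i + 1 = (2*k+i) + 1 := by omega
  simp only [Dk, h, h2, fk_succ]
  rw [recL_aux_succ (fk k i) (2*k+i) c]

lemma recL_zero (k i : ℕ) : Dk k (i+1) 0 = Dk k i 0 := by
  have h : 2 * k + (i+1) + 1 = (2*k+i) + 2 := by omega
  have h2 : 2 * k + i + 1 = (2*k+i) + 1 := by omega
  simp only [Dk, h, h2, fk_succ]
  rw [recL_aux_zero (fk k i) (2*k+i)]

-- base case
lemma Dk00 (c : ℕ) : Dk 0 0 c = if c = 0 then 1 else 0 := by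
  have h : fk 0 0 = fun _ => 1 := by funext m; simp [fk]
  have h2 : (1 - PowerSeries.X) * PowerSeries.mk (fk 0 0) = 1 := by
    ext n
    cases n with
    | zero => rw [coeff_one_sub_X_mul_zero]; simp [h]
    | succ m => rw [coeff_one_sub_X_mul_succ]; simp [h]
  simp only [Dk]
  norm_num [h2, PowerSeries.coeff_one]

lemma fk_delta (k i : ℕ) (m : ℕ) :
    2 * fk (k+1) i m = fk k (i+2) m + fk k (i+1) m := by
  simp only [fk]
  have hd : 2 ∣ ((m : ℤ) + 1) * ((m : ℤ) + 2) := by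
    have := Int.even_mul_succ_self ((m : ℤ) + 1)
    have h : ((m : ℤ) + 1) * (((m : ℤ) + 1) + 1) = ((m : ℤ) + 1) * ((m : ℤ) + 2) := by ring
    rw [h] at this
    exact this.two_dvd
  have h2 : 2 * (((m : ℤ) + 1) * ((m : ℤ) + 2) / 2) = ((m : ℤ) + 1) * ((m : ℤ) + 2) :=
    Int.mul_ediv_cancel' hd
  rw [pow_succ]
  calc 2 * ((((m : ℤ) + 1) * ((m : ℤ) + 2) / 2) ^ k * (((m : ℤ) + 1) * ((m : ℤ) + 2) / 2) *
        ((m : ℤ) + 1) ^ i)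
      = (2 * (((m : ℤ) + 1) * ((m : ℤ) + 2) / 2)) *
          ((((m : ℤ) + 1) * ((m : ℤ) + 2) / 2) ^ k * ((m : ℤ) + 1) ^ i) := by ring
    _ = (((m : ℤ) + 1) * ((m : ℤ) + 2)) *
          ((((m : ℤ) + 1) * ((m : ℤ) + 2) / 2) ^ k * ((m : ℤ) + 1) ^ i) := by rw [h2]
    _ = _ := by ring

lemma mk_delta (k i : ℕ) :
    PowerSeries.C (R := ℤ) 2 * PowerSeries.mk (fk (k+1) i)
      = PowerSeries.mk (fk k (i+2)) + PowerSeries.mk (fk k (i+1)) := by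
  ext c
  rw [PowerSeries.coeff_C_mul, map_add, PowerSeries.coeff_mk, PowerSeries.coeff_mk,
    PowerSeries.coeff_mk]
  exact fk_delta k i c

lemma series_delta (k i : ℕ) :
    PowerSeries.C (R := ℤ) 2 * ((1 - PowerSeries.X) ^ (2*(k+1)+i+1) * PowerSeries.mk (fk (k+1) i))
      = (1 - PowerSeries.X) ^ (2*k+(i+2)+1) * PowerSeries.mk (fk k (i+2))
        + (1 - PowerSeries.X) *
          ((1 - PowerSeries.X) ^ (2*k+(i+1)+1) * PowerSeries.mk (fk k (i+1))) := by
  have e1 : 2*(k+1)+i+1 = 2*k+(i+2)+1 := by omega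
  have e2 : 2*k+(i+2)+1 = (2*k+(i+1)+1) + 1 := by omega
  have hm : PowerSeries.C (R := ℤ) 2 * ((1 - PowerSeries.X) ^ (2*k+(i+2)+1) * PowerSeries.mk (fk (k+1) i))
      = (1 - PowerSeries.X) ^ (2*k+(i+2)+1) * (PowerSeries.C (R := ℤ) 2 * PowerSeries.mk (fk (k+1) i)) := by
    ring
  rw [e1, hm, mk_delta, e2, pow_succ]
  ring

lemma recT_succ (k i c : ℕ) :
    2 * Dk (k+1) i (c+1) = Dk k (i+2) (c+1) + Dk k (i+1) (c+1) - Dk k (i+1) c := by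
  have h := congrArg (PowerSeries.coeff (R := ℤ) (c+1)) (series_delta k i)
  rw [PowerSeries.coeff_C_mul, map_add, coeff_one_sub_X_mul_succ] at h
  simp only [Dk]
  omega

lemma recT_zero (k i : ℕ) :
    2 * Dk (k+1) i 0 = Dk k (i+2) 0 + Dk k (i+1) 0 := by
  have h := congrArg (PowerSeries.coeff (R := ℤ) 0) (series_delta k i)
  rw [PowerSeries.coeff_C_mul, map_add, coeff_one_sub_X_mul_zero] at h
  simpa only [Dk] using h

/-- symmetric + unimodal + nonneg, supported on [0,s], positive top -/
def SymU (D : ℕ → ℤ) (s : ℕ) : Prop :=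
  (∀ j, s < j → D j = 0) ∧ (∀ j, 0 ≤ D j) ∧ 0 < D s ∧
  (∀ a b, a + b = s → D a = D b) ∧
  (∀ a, 2*a + 1 ≤ s → D a ≤ D (a+1))

/-- alternatingly increasing, supported on [0,s], positive top -/
def AI (D : ℕ → ℤ) (s : ℕ) : Prop :=
  (∀ j, s < j → D j = 0) ∧ (∀ j, 0 ≤ D j) ∧ 0 < D s ∧
  (∀ a, 2*a ≤ s → D a ≤ D (s - a)) ∧
  (∀ a, 2*a + 1 ≤ s → D (s - a) ≤ D (a+1))

lemma twostep {S : ℕ → ℤ} {s : ℕ} (h : SymU S s) :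
    ∀ x, 2*x + 2 ≤ s → S x ≤ S (x+2) := by
  obtain ⟨hsupp, hnn, htop, hsym, hinc⟩ := h
  intro x hx
  rcases Nat.lt_or_ge (2*x+2) s with hlt | hge
  · exact le_trans (hinc x (by omega)) (hinc (x+1) (by omega))
  · exact le_of_eq (hsym x (x+2) (by omega))

lemma SymU.toAI {D : ℕ → ℤ} {s : ℕ} (h : SymU D s) : AI D s := by
  obtain ⟨hsupp, hnn, htop, hsym, hinc⟩ := h
  refine ⟨hsupp, hnn, htop, ?_, ?_⟩
  · intro a ha
    exact le_of_eq (hsym a (s - a) (by omega))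
  · intro a ha
    calc D (s - a) = D a := hsym (s-a) a (by omega)
      _ ≤ D (a+1) := hinc a ha

lemma Estep {D D' : ℕ → ℤ} {s : ℕ} (h : SymU D s)
    (h0 : D' 0 = D 0)
    (hs : ∀ c : ℕ, D' (c+1) = ((c:ℤ)+2) * D (c+1) + ((s:ℤ)+1-(c:ℤ)) * D c) :
    SymU D' (s+1) := by
  obtain ⟨hsupp, hnn, htop, hsym, hinc⟩ := h
  have hsupp' : ∀ j, s + 1 < j → D' j = 0 := by
    intro j hj
    obtain ⟨c, rfl⟩ : ∃ c, j = c + 1 := ⟨j - 1, by omega⟩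
    rw [hs c, hsupp (c+1) (by omega), hsupp c (by omega)]
    ring
  have hnn' : ∀ j, 0 ≤ D' j := by
    intro j
    match j with
    | 0 => rw [h0]; exact hnn 0
    | c + 1 =>
      rcases Nat.lt_or_ge s c with hc | hc
      · rw [hsupp' (c+1) (by omega)]
      · rw [hs c]
        have c1 : (0:ℤ) ≤ (c:ℤ)+2 := by positivity
        have c2 : (0:ℤ) ≤ (s:ℤ)+1-(c:ℤ) := by omega
        have := hnn (c+1); have := hnn c
        positivity
  have htop' : 0 < D' (s+1) := by
    have := hs s
    rw [hsupp (s+1) (by omega)] at this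
    have h2 : D' (s+1) = D s := by rw [this]; ring
    rw [h2]; exact htop
  have hsym' : ∀ a b, a + b = s + 1 → D' a = D' b := by
    have key : ∀ a b, a + b = s + 1 → a ≤ b → D' a = D' b := by
      intro a b hab hle
      match a with
      | 0 =>
        have hb : b = s + 1 := by omega
        subst hb
        have := hs s
        rw [hsupp (s+1) (by omega)] at this
        rw [h0, this, hsym 0 s (by omega)]; ring
      | c + 1 =>
        obtain ⟨e, rfl⟩ : ∃ e, b = e + 1 := ⟨b - 1, by omega⟩
        have hce : c + e = s - 1 := by omega
        have hse : c + 1 + e = s := by omega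
        rw [hs c, hs e, hsym (c+1) e (by omega), hsym c (e+1) (by omega)]
        have he : (e:ℤ) = (s:ℤ) - 1 - (c:ℤ) := by omega
        rw [he]; ring
    intro a b hab
    rcases Nat.le_total a b with hle | hle
    · exact key a b hab hle
    · exact (key b a (by omega) hle).symm
  refine ⟨hsupp', hnn', htop', hsym', ?_⟩
  intro a ha
  rcases Nat.lt_or_ge (2*a+1) (s+1) with hlt | hge
  · -- 2a+1 ≤ s
    have hcond : 2*a + 1 ≤ s := by omega
    match a with
    | 0 =>
      rw [h0, hs 0]
      have f1 : 0 ≤ D 1 := hnn 1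
      have f2 : 0 ≤ (s:ℤ) * D 0 := mul_nonneg (by positivity) (hnn 0)
      have f0 : 0 ≤ D 0 := hnn 0
      push_cast
      linarith
    | c + 1 =>
      -- 2c+3 ≤ s
      rw [hs c, hs (c+1)]
      have f1 : D c ≤ D (c+2) := twostep ⟨hsupp, hnn, htop, hsym, hinc⟩ c (by omega)
      have f2 : D c ≤ D (c+1) := hinc c (by omega)
      have p1 : ((c:ℤ)+3) * D c ≤ ((c:ℤ)+3) * D (c+2) :=
        mul_le_mul_of_nonneg_left f1 (by positivity)
      have p2 : ((s:ℤ)-2*c-2) * D c ≤ ((s:ℤ)-2*c-2) * D (c+1) :=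
        mul_le_mul_of_nonneg_left f2 (by omega)
      push_cast
      linarith
  · -- 2a+1 = s+1 : symmetry gives equality
    exact le_of_eq (hsym' a (a+1) (by omega))

lemma Lstep {D D' : ℕ → ℤ} {s : ℕ} (h : AI D s)
    (h0 : D' 0 = D 0)
    (hs : ∀ c : ℕ, D' (c+1) = ((c:ℤ)+2) * D (c+1) + ((s:ℤ)+2-(c:ℤ)) * D c) :
    AI D' (s+1) := by
  obtain ⟨hsupp, hnn, htop, hA, hB⟩ := h
  have hsupp' : ∀ j, s + 1 < j → D' j = 0 := by
    intro j hj
    obtain ⟨c, rfl⟩ : ∃ c, j = c + 1 := ⟨j - 1, by omega⟩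
    rw [hs c, hsupp (c+1) (by omega), hsupp c (by omega)]
    ring
  have hnn' : ∀ j, 0 ≤ D' j := by
    intro j
    match j with
    | 0 => rw [h0]; exact hnn 0
    | c + 1 =>
      rcases Nat.lt_or_ge s c with hc | hc
      · exact le_of_eq (hsupp' (c+1) (by omega)).symm
      · rw [hs c]
        have c2 : (0:ℤ) ≤ (s:ℤ)+2-(c:ℤ) := by omega
        have := hnn (c+1); have := hnn c
        have c1 : (0:ℤ) ≤ (c:ℤ)+2 := by positivity
        positivity
  have htop' : 0 < D' (s+1) := by
    have h2 : D' (s+1) = 2 * D s := by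
      rw [hs s, hsupp (s+1) (by omega)]; ring
    rw [h2]; linarith
  have hA' : ∀ a, 2*a ≤ s+1 → D' a ≤ D' (s+1-a) := by
    intro a ha
    match a with
    | 0 =>
      have h2 : D' (s+1) = 2 * D s := by
        rw [hs s, hsupp (s+1) (by omega)]; ring
      have f1 : D 0 ≤ D s := by
        have := hA 0 (by omega); rwa [Nat.sub_zero] at this
      rw [h0]
      simp only [Nat.sub_zero]
      rw [h2]
      have := hnn s
      linarith
    | c + 1 =>
      rcases Nat.lt_or_ge (2*(c+1)) (s+1) with hlt | hge
      · -- 2(c+1) ≤ s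
        have hcs : 2*c + 2 ≤ s := by omega
        set e := s - (c+1) with hedef
        have hre : s + 1 - (c+1) = e + 1 := by omega
        rw [hre, hs c, hs e]
        have he : (e:ℤ) = (s:ℤ) - (c:ℤ) - 1 := by omega
        have f1 : D (c+1) ≤ D e := by
          have := hA (c+1) (by omega)
          rwa [show s - (c+1) = e from rfl] at this
        have f2 : D c ≤ D (e+1) := by
          have := hA c (by omega)
          rwa [show s - c = e + 1 by omega] at this
        have f3 : D (e+1) ≤ D (c+1) := by
          have := hB c (by omega)
          rwa [show s - c = e + 1 by omega] at this
        have p1 : ((c:ℤ)+2) * D (c+1) ≤ ((c:ℤ)+2) * D e :=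
          mul_le_mul_of_nonneg_left f1 (by positivity)
        have p2 : ((s:ℤ)+2-(c:ℤ)) * D c ≤ ((s:ℤ)+2-(c:ℤ)) * D (e+1) :=
          mul_le_mul_of_nonneg_left f2 (by omega)
        rw [he]
        linarith
      · -- 2(c+1) = s+1, target index equals source
        rw [show s + 1 - (c+1) = c + 1 by omega]
  have hB' : ∀ a, 2*a + 1 ≤ s+1 → D' (s+1-a) ≤ D' (a+1) := by
    intro a ha
    rcases Nat.lt_or_ge (2*a+1) (s+1) with hlt | hge
    · -- 2a+1 ≤ s
      have hcs : 2*a + 1 ≤ s := by omega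
      set e := s - a with hedef
      have hre : s + 1 - a = e + 1 := by omega
      rw [hre, hs e, hs a]
      have he : (e:ℤ) = (s:ℤ) - (a:ℤ) := by omega
      have f2 : D e ≤ D (a+1) := by
        have := hB a (by omega)
        rwa [show s - a = e from rfl] at this
      have f1 : D (e+1) ≤ D a := by
        match a with
        | 0 =>
          rw [show e + 1 = s + 1 by omega, hsupp (s+1) (by omega)]
          exact hnn 0
        | b + 1 =>
          have := hB b (by omega)
          rwa [show s - b = e + 1 by omega] at this
      have p1 : ((e:ℤ)+2) * D (e+1) ≤ ((e:ℤ)+2) * D a :=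
        mul_le_mul_of_nonneg_left f1 (by positivity)
      have p2 : ((s:ℤ)+2-(e:ℤ)) * D e ≤ ((s:ℤ)+2-(e:ℤ)) * D (a+1) :=
        mul_le_mul_of_nonneg_left f2 (by omega)
      rw [he] at p1 p2 ⊢
      linarith
    · -- 2a = s+1-... equality case : s+1-a = a+1
      rw [show s + 1 - a = a + 1 by omega]
  exact ⟨hsupp', hnn', htop', hA', hB'⟩


lemma Tstep {S T : ℕ → ℤ} {s : ℕ} (h : SymU S s)
    (h0 : 2 * T 0 = 2 * S 0)
    (h1 : 2 * T 1 = 6 * S 1 + 4*((s:ℤ)+2) * S 0)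
    (hs : ∀ c : ℕ, 2 * T (c+2)
      = ((c:ℤ)+3)*((c:ℤ)+4) * S (c+2) + ((s:ℤ)+1-(c:ℤ))*(2*(c:ℤ)+6) * S (c+1)
        + ((s:ℤ)+1-(c:ℤ))*((s:ℤ)+2-(c:ℤ)) * S c) :
    SymU T (s+2) := by
  obtain ⟨hsupp, hnn, htop, hsym, hinc⟩ := h
  have hsupp' : ∀ j, s + 2 < j → T j = 0 := by
    intro j hj
    obtain ⟨c, rfl⟩ : ∃ c, j = c + 2 := ⟨j - 2, by omega⟩
    have := hs c
    rw [hsupp (c+2) (by omega), hsupp (c+1) (by omega), hsupp c (by omega)] at this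
    have h2 : 2 * T (c+2) = 0 := by rw [this]; ring
    omega
  have hnn' : ∀ j, 0 ≤ T j := by
    intro j
    match j with
    | 0 => have := hnn 0; omega
    | 1 =>
      have e1 := h1
      have f1 : 0 ≤ 6 * S 1 := by have := hnn 1; positivity
      have f0 : 0 ≤ 4*((s:ℤ)+2) * S 0 := by
        have h00 := hnn 0
        have : (0:ℤ) ≤ 4*((s:ℤ)+2) := by positivity
        positivity
      omega
    | c + 2 =>
      rcases Nat.lt_or_ge s c with hc | hc
      · have := hsupp' (c+2) (by omega); omega
      · have e1 := hs c
        have f1 : 0 ≤ ((c:ℤ)+3)*((c:ℤ)+4) * S (c+2) := by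
          have := hnn (c+2); positivity
        have f2 : 0 ≤ ((s:ℤ)+1-(c:ℤ))*(2*(c:ℤ)+6) * S (c+1) := by
          have h1' := hnn (c+1)
          have c1 : (0:ℤ) ≤ (s:ℤ)+1-(c:ℤ) := by omega
          have c2 : (0:ℤ) ≤ 2*(c:ℤ)+6 := by positivity
          positivity
        have f3 : 0 ≤ ((s:ℤ)+1-(c:ℤ))*((s:ℤ)+2-(c:ℤ)) * S c := by
          have h1' := hnn c
          have c1 : (0:ℤ) ≤ (s:ℤ)+1-(c:ℤ) := by omega
          have c2 : (0:ℤ) ≤ (s:ℤ)+2-(c:ℤ) := by omega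
          positivity
        omega
  have htop' : 0 < T (s+2) := by
    have e1 := hs s
    rw [hsupp (s+2) (by omega), hsupp (s+1) (by omega)] at e1
    have h2 : 2 * T (s+2) = 2 * S s := by rw [e1]; ring
    omega
  have hsym' : ∀ a b, a + b = s + 2 → T a = T b := by
    have key : ∀ a b, a + b = s + 2 → a ≤ b → T a = T b := by
      intro a b hab hle
      match a with
      | 0 =>
        have hb : b = s + 2 := by omega
        subst hb
        have e1 := hs s
        rw [hsupp (s+2) (by omega), hsupp (s+1) (by omega), hsym s 0 (by omega)] at e1
        have : 2 * T (s+2) = 2 * S 0 := by rw [e1]; ring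
        omega
      | 1 =>
        have hb : b = s + 1 := by omega
        subst hb
        rcases Nat.eq_zero_or_pos s with hz | hp
        · subst hz; rfl
        · obtain ⟨c, rfl⟩ : ∃ c, s = c + 1 := ⟨s - 1, by omega⟩
          have e1 := hs c
          rw [show c + 2 = (c:ℕ) + 1 + 1 from rfl] at e1
          rw [hsupp (c+1+1) (by omega)] at e1
          have hs1 : S (c+1) = S 0 := hsym (c+1) 0 (by omega)
          have hs2 : S c = S 1 := hsym c 1 (by omega)
          rw [hs1, hs2] at e1
          have : 2 * T (c+1+1) = 2 * T 1 := by
            rw [e1, h1]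
            push_cast
            ring
          omega
      | c + 2 =>
        obtain ⟨e, rfl⟩ : ∃ e, b = e + 2 := ⟨b - 2, by omega⟩
        have hce : c + 2 + e = s := by omega
        have e1 := hs c
        have e2 := hs e
        have he : (e:ℤ) = (s:ℤ) - 2 - (c:ℤ) := by omega
        rw [hsym (c+2) e (by omega), hsym (c+1) (e+1) (by omega), hsym c (e+2) (by omega)] at e1
        have : 2 * T (c+2) = 2 * T (e+2) := by
          rw [e1, e2, he]; ring
        omega
    intro a b hab
    rcases Nat.le_total a b with hle | hle
    · exact key a b hab hle
    · exact (key b a (by omega) hle).symm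
  refine ⟨hsupp', hnn', htop', hsym', ?_⟩
  intro a ha
  rcases Nat.lt_or_ge (2*a+1) (s+2) with hlt | hge
  · -- 2a+1 ≤ s+1
    match a with
    | 0 =>
      show T 0 ≤ T 1
      have f1 : 0 ≤ 6 * S 1 := by have := hnn 1; positivity
      have f2 : 0 ≤ (4*(s:ℤ)+6) * S 0 := by
        have h00 := hnn 0
        have : (0:ℤ) ≤ 4*(s:ℤ)+6 := by positivity
        positivity
      have : 2 * T 0 ≤ 2 * T 1 := by rw [h0, h1]; linarith
      omega
    | 1 =>
      show T 1 ≤ T 2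
      -- s ≥ 2
      have hs2 : 2 ≤ s := by omega
      have e2 := hs 0
      have f1 : S 0 ≤ S 2 := twostep ⟨hsupp, hnn, htop, hsym, hinc⟩ 0 (by omega)
      have f2 : S 0 ≤ S 1 := hinc 0 (by omega)
      have f0 : 0 ≤ S 0 := hnn 0
      have p1 : (12:ℤ) * S 0 ≤ 12 * S 2 := by linarith
      have p2 : 6*(s:ℤ) * S 0 ≤ 6*(s:ℤ) * S 1 :=
        mul_le_mul_of_nonneg_left f2 (by positivity)
      have p3 : (0:ℤ) ≤ ((s:ℤ)+2)*((s:ℤ)+3) * S 0 := by positivity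
      have : 2 * T 1 ≤ 2 * T 2 := by
        rw [h1, e2]
        push_cast
        nlinarith [p1, p2, p3]
      omega
    | c + 2 =>
      show T (c+2) ≤ T (c+3)
      -- 2c+4 ≤ s
      have hcs : 2*c + 4 ≤ s := by omega
      have e1 := hs c
      have e2 := hs (c+1)
      have f1 : S (c+1) ≤ S (c+3) := twostep ⟨hsupp, hnn, htop, hsym, hinc⟩ (c+1) (by omega)
      have f2 : S (c+1) ≤ S (c+2) := hinc (c+1) (by omega)
      have f3 : S c ≤ S (c+1) := hinc c (by omega)
      have p1 : ((c:ℤ)+4)*((c:ℤ)+5) * S (c+1) ≤ ((c:ℤ)+4)*((c:ℤ)+5) * S (c+3) :=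
        mul_le_mul_of_nonneg_left f1 (by positivity)
      have p2 : ((c:ℤ)+4)*(2*(s:ℤ)-3*(c:ℤ)-3) * S (c+1) ≤ ((c:ℤ)+4)*(2*(s:ℤ)-3*(c:ℤ)-3) * S (c+2) := by
        apply mul_le_mul_of_nonneg_left f2
        have : (0:ℤ) ≤ (c:ℤ)+4 := by positivity
        have : (0:ℤ) ≤ 2*(s:ℤ)-3*(c:ℤ)-3 := by omega
        positivity
      have p3 : ((s:ℤ)+1-(c:ℤ))*((s:ℤ)+2-(c:ℤ)) * S c ≤ ((s:ℤ)+1-(c:ℤ))*((s:ℤ)+2-(c:ℤ)) * S (c+1) := by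
        apply mul_le_mul_of_nonneg_left f3
        have c1 : (0:ℤ) ≤ (s:ℤ)+1-(c:ℤ) := by omega
        have c2 : (0:ℤ) ≤ (s:ℤ)+2-(c:ℤ) := by omega
        positivity
      have : 2 * T (c+2) ≤ 2 * T (c+3) := by
        rw [e1, show (c:ℕ)+3 = (c+1)+2 from rfl, e2]
        push_cast
        nlinarith [p1, p2, p3]
      omega
  · -- 2a+1 = s+2 : symmetry
    exact le_of_eq (hsym' a (a+1) (by omega))

-- explicit small values
lemma Dk01 (c : ℕ) : Dk 0 1 c = if c = 0 then 1 else 0 := by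
  match c with
  | 0 => rw [recL_zero, Dk00]
  | c + 1 =>
    rw [recL_succ, Dk00, Dk00]
    match c with
    | 0 => norm_num
    | c + 1 => norm_num

lemma Dk02 (c : ℕ) : Dk 0 2 c = if c ≤ 1 then 1 else 0 := by
  match c with
  | 0 => rw [recL_zero, Dk01]; norm_num
  | 1 =>
    rw [show (1:ℕ) = 0 + 1 from rfl, recL_succ, Dk01, Dk01]
    norm_num
  | c + 2 =>
    rw [show c + 2 = (c+1) + 1 from rfl, recL_succ, Dk01, Dk01]
    norm_num

lemma Dk10 (c : ℕ) : Dk 1 0 c = if c = 0 then 1 else 0 := by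
  match c with
  | 0 =>
    have h := recT_zero 0 0
    rw [Dk02, Dk01] at h
    norm_num at h ⊢
    omega
  | 1 =>
    have h := recT_succ 0 0 0
    rw [Dk02, Dk01, Dk01] at h
    norm_num at h ⊢
    omega
  | c + 2 =>
    have h : 2 * Dk 1 0 (c+2) = Dk 0 2 (c+2) + Dk 0 1 (c+2) - Dk 0 1 (c+1) :=
      recT_succ 0 0 (c+1)
    rw [Dk02, Dk01, Dk01] at h
    norm_num at h ⊢
    omega

lemma euler : ∀ i : ℕ, SymU (Dk 0 (i+1)) i := by
  intro i
  induction i with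
  | zero =>
    refine ⟨?_, ?_, ?_, ?_, ?_⟩
    · intro j hj
      rw [Dk01]
      have : j ≠ 0 := by omega
      simp [this]
    · intro j; rw [Dk01]; split <;> norm_num
    · rw [Dk01]; norm_num
    · intro a b hab
      have : a = 0 ∧ b = 0 := by omega
      rw [this.1, this.2]
    · intro a ha; omega
  | succ i ih =>
    have hrec : ∀ c : ℕ, Dk 0 (i+2) (c+1)
        = ((c:ℤ)+2) * Dk 0 (i+1) (c+1) + ((i:ℤ)+1-(c:ℤ)) * Dk 0 (i+1) c := by
      intro c
      have h := recL_succ 0 (i+1) c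
      push_cast at h ⊢
      linear_combination h
    exact Estep ih (recL_zero 0 (i+1)) hrec

lemma sym0 : ∀ k : ℕ, SymU (Dk (k+1) 0) (2*k) := by
  intro k
  induction k with
  | zero =>
    refine ⟨?_, ?_, ?_, ?_, ?_⟩
    · intro j hj
      rw [Dk10]
      have : j ≠ 0 := by omega
      simp [this]
    · intro j; rw [Dk10]; split <;> norm_num
    · rw [Dk10]; norm_num
    · intro a b hab
      have : a = 0 ∧ b = 0 := by omega
      rw [this.1, this.2]
    · intro a ha; omega
  | succ k ih =>
    -- S := Dk (k+1) 0, s = 2k ; T := Dk (k+2) 0 ; goal SymU T (2k+2)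
    have hG1z : Dk (k+1) 1 0 = Dk (k+1) 0 0 := recL_zero (k+1) 0
    have hG2z : Dk (k+1) 2 0 = Dk (k+1) 1 0 := recL_zero (k+1) 1
    have hT0 : 2 * Dk (k+2) 0 0 = 2 * Dk (k+1) 0 0 := by
      have h : 2 * Dk (k+2) 0 0 = Dk (k+1) 2 0 + Dk (k+1) 1 0 := recT_zero (k+1) 0
      rw [hG2z, hG1z] at h
      omega
    have hT1 : 2 * Dk (k+2) 0 1 = 6 * Dk (k+1) 0 1 + 4*((2*k:ℤ)+2) * Dk (k+1) 0 0 := by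
      have h : 2 * Dk (k+2) 0 1 = Dk (k+1) 2 1 + Dk (k+1) 1 1 - Dk (k+1) 1 0 :=
        recT_succ (k+1) 0 0
      rw [recL_succ (k+1) 1 0, recL_succ (k+1) 0 0, hG1z] at h
      push_cast at h ⊢
      linear_combination h
    have hTs : ∀ c : ℕ, 2 * Dk (k+2) 0 (c+2)
        = ((c:ℤ)+3)*((c:ℤ)+4) * Dk (k+1) 0 (c+2)
          + ((2*k:ℤ)+1-(c:ℤ))*(2*(c:ℤ)+6) * Dk (k+1) 0 (c+1)
          + ((2*k:ℤ)+1-(c:ℤ))*((2*k:ℤ)+2-(c:ℤ)) * Dk (k+1) 0 c := by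
      intro c
      have h : 2 * Dk (k+2) 0 (c+2) = Dk (k+1) 2 (c+2) + Dk (k+1) 1 (c+2) - Dk (k+1) 1 (c+1) :=
        recT_succ (k+1) 0 (c+1)
      rw [show (c:ℕ)+2 = (c+1)+1 from rfl, recL_succ (k+1) 1 (c+1),
        recL_succ (k+1) 0 (c+1), recL_succ (k+1) 0 c] at h
      push_cast at h ⊢
      linear_combination h
    have := Tstep ih hT0 hT1 hTs
    have h2 : 2*k+2 = 2*(k+1) := by omega
    rwa [h2] at this

lemma AIfam : ∀ (k i : ℕ), AI (Dk (k+1) i) (2*k+i) := by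
  intro k i
  induction i with
  | zero => exact (sym0 k).toAI
  | succ i ih =>
    have hrec : ∀ c : ℕ, Dk (k+1) (i+1) (c+1)
        = ((c:ℤ)+2) * Dk (k+1) i (c+1) + (((2*k+i:ℕ):ℤ)+2-(c:ℤ)) * Dk (k+1) i c := by
      intro c
      have h := recL_succ (k+1) i c
      push_cast at h ⊢
      linear_combination h
    have := Lstep ih (recL_zero (k+1) i) hrec
    have h2 : 2*k+i+1 = 2*k+(i+1) := by omega
    rwa [h2] at this

end DSCAI

end
open DSCAI in
/-- For all `k, i ≥ 0`, not both zero, the δ-vector of `Δ^k × ℓ^i` is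
alternatingly increasing; in particular it is unimodal with maximum at index
`⌊(2k+i-1)/2⌋`.  Here `Δ` is the standard 2-simplex and `ℓ` the unit segment,
so `#(m(Δ^k × ℓ^i)) = ((m+1)(m+2)/2)^k (m+1)^i` and `dim = 2k + i`. -/
theorem delta_simplex_cube_alternatingly_increasing (k i : ℕ) (hki : ¬(k = 0 ∧ i = 0)) :
    ∀ D : ℕ → ℤ,
      (∀ c : ℕ,
        D c = PowerSeries.coeff (R := ℤ) c ((1 - PowerSeries.X) ^ (2 * k + i + 1) *
          PowerSeries.mk (fun m : ℕ =>
            ((((m : ℤ) + 1) * ((m : ℤ) + 2) / 2) ^ k * ((m : ℤ) + 1) ^ i : ℤ)))) →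
      ∃ s : ℕ, (∀ j, s < j → D j = 0) ∧ D s ≠ 0 ∧
        -- alternatingly increasing: D_0 ≤ D_s ≤ D_1 ≤ D_{s-1} ≤ ⋯ ≤ D_{⌊(s+1)/2⌋}
        ((∀ a, a ≤ s / 2 → D a ≤ D (s - a)) ∧
          (∀ a, a + 1 ≤ (s + 1) / 2 → D (s - a) ≤ D (a + 1))) ∧
        -- unimodal with maximum at index ⌊(2k+i-1)/2⌋
        ((∀ a, a < (2 * k + i - 1) / 2 → D a ≤ D (a + 1)) ∧
          (∀ a, (2 * k + i - 1) / 2 ≤ a → D (a + 1) ≤ D a)) := by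
  intro D hD
  have hDeq : D = Dk k i := funext fun c => by rw [hD c]; rfl
  subst hDeq
  match k with
  | 0 =>
    -- i ≥ 1, Eulerian (symmetric unimodal) case, s = i - 1
    obtain ⟨i', rfl⟩ : ∃ i', i = i' + 1 := ⟨i - 1, by omega⟩
    obtain ⟨hsupp, hnn, htop, hsym, hinc⟩ := euler i'
    refine ⟨i', hsupp, htop.ne', ⟨?_, ?_⟩, ?_, ?_⟩
    · intro a ha
      exact le_of_eq (hsym a (i' - a) (by omega))
    · intro a ha
      calc Dk 0 (i'+1) (i' - a) = Dk 0 (i'+1) a := hsym (i'-a) a (by omega)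
        _ ≤ Dk 0 (i'+1) (a+1) := hinc a (by omega)
    · intro a ha
      exact hinc a (by omega)
    · intro a ha
      rcases Nat.lt_or_ge a i' with hai | hai
      · -- a < i'
        calc Dk 0 (i'+1) (a+1) = Dk 0 (i'+1) (i'-a-1) := hsym (a+1) (i'-a-1) (by omega)
          _ ≤ Dk 0 (i'+1) (i'-a-1+1) := hinc (i'-a-1) (by omega)
          _ = Dk 0 (i'+1) a := by
              rw [show i'-a-1+1 = i'-a by omega]
              exact hsym (i'-a) a (by omega)
      · -- a ≥ i'
        rw [hsupp (a+1) (by omega)]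
        exact hnn a
  | k' + 1 =>
    obtain ⟨hsupp, hnn, htop, hA, hB⟩ := AIfam k' i
    set s := 2*k' + i with hsdef
    have hpk : (2 * (k'+1) + i - 1) / 2 = (s+1)/2 := by omega
    refine ⟨s, hsupp, htop.ne', ⟨?_, ?_⟩, ?_, ?_⟩
    · intro a ha
      exact hA a (by omega)
    · intro a ha
      exact hB a (by omega)
    · intro a ha
      rw [hpk] at ha
      calc Dk (k'+1) i a ≤ Dk (k'+1) i (s - a) := hA a (by omega)
        _ ≤ Dk (k'+1) i (a+1) := hB a (by omega)
    · intro a ha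
      rw [hpk] at ha
      rcases Nat.lt_or_ge a s with hai | hai
      · have h1 : Dk (k'+1) i (a+1) ≤ Dk (k'+1) i (s - a) := by
          have := hB (s-a-1) (by omega)
          rwa [show s-(s-a-1) = a+1 by omega, show s-a-1+1 = s-a by omega] at this
        have h2 : Dk (k'+1) i (s - a) ≤ Dk (k'+1) i a := by
          have := hA (s-a) (by omega)
          rwa [show s-(s-a) = a by omega] at this
        exact le_trans h1 h2
      · rw [hsupp (a+1) (by omega)]
        exact hnn a
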